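/- Let X ≥ 0 and D be independent real-valued random variables such that max(X + D, 0) has the same distribution as X. (i) If β > 0 satisfies E[e^{βD}] > 1, then E[e^{βX}] = ∞. (ii) Consequently, if P{D > 0} > 0 and π is an invariant probability measure for the reflected random walk kernel x ↦ law of max(x + D, 0), then there exists β₀ > 0 such that ∫ e^{βx} π(dx) = ∞ for every β ≥ β₀. -/

import Mathlib

open MeasureTheory ProbabilityTheory Filter
open scoped ENNReal

private lemma key_top {A B : ℝ≥0∞} (hA : 0 < A) (hB : 1 < B) (h : A * B ≤ A) : A = ⊤ := by
  by_contra hfin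
  have h1 : A * 1 < A * B := (ENNReal.mul_lt_mul_iff_right hA.ne' hfin).mpr hB
  rw [mul_one] at h1
  exact absurd (h1.trans_le h) (lt_irrefl _)

private lemma lint_pos {α : Type*} [MeasurableSpace α] (μ : Measure α) [IsProbabilityMeasure μ]
    {g : α → ℝ≥0∞} (hg : Measurable g) (hpos : ∀ a, 0 < g a) : 0 < ∫⁻ a, g a ∂μ := by
  rw [lintegral_pos_iff_support hg]
  have : Function.support g = Set.univ := Set.eq_univ_of_forall fun a => (hpos a).ne'
  rw [this]
  simp

private lemma measE (β : ℝ) : Measurable (fun t : ℝ => ENNReal.ofReal (Real.exp (β * t))) :=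
  ENNReal.measurable_ofReal.comp (Real.measurable_exp.comp (measurable_const.mul measurable_id))

private lemma expE_pos (β t : ℝ) : 0 < ENNReal.ofReal (Real.exp (β * t)) :=
  ENNReal.ofReal_pos.mpr (Real.exp_pos _)

private lemma mul_le_max (β : ℝ) (hβ : 0 < β) (x d : ℝ) :
    ENNReal.ofReal (Real.exp (β * x)) * ENNReal.ofReal (Real.exp (β * d))
      ≤ ENNReal.ofReal (Real.exp (β * max (x + d) 0)) := by
  rw [← ENNReal.ofReal_mul (Real.exp_pos _).le, ← Real.exp_add, ← mul_add]
  exact ENNReal.ofReal_le_ofReal (Real.exp_le_exp.2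
    (mul_le_mul_of_nonneg_left (le_max_left _ _) hβ.le))

/-- **Proposition 3.2(iii).** (i) If `X ≥ 0` and `D` are independent and
`max(X + D, 0)` has the same law as `X`, then `E[e^{βD}] > 1` for some `β > 0` implies
`E[e^{βX}] = ∞`. (ii) Consequently, if `P{D > 0} > 0` and `π` is an invariant probability
measure for the reflected random walk kernel `x ↦ law of max(x + D, 0)`, then
`∫ e^{βx} π(dx) = ∞` for all sufficiently large `β`. -/
theorem reflected_rw_stationary_exponential_moments {Ω : Type*} [MeasureSpace Ω]
    [IsProbabilityMeasure (ℙ : Measure Ω)]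
    (D : Ω → ℝ) (hD : Measurable D) :
    (∀ X : Ω → ℝ, Measurable X → (∀ ω, 0 ≤ X ω) → IndepFun X D →
      Measure.map (fun ω => max (X ω + D ω) 0) ℙ = Measure.map X ℙ →
      ∀ β : ℝ, 0 < β → 1 < (∫⁻ ω, ENNReal.ofReal (Real.exp (β * D ω))) →
        (∫⁻ ω, ENNReal.ofReal (Real.exp (β * X ω))) = ⊤) ∧
    (0 < ℙ {ω | 0 < D ω} →
      ∀ π : Measure ℝ, IsProbabilityMeasure π →
        Measure.map (fun p : ℝ × ℝ => max (p.1 + p.2) 0) (π.prod (Measure.map D ℙ)) = π →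
        ∃ β₀ : ℝ, 0 < β₀ ∧ ∀ β : ℝ, β₀ ≤ β →
          (∫⁻ t, ENNReal.ofReal (Real.exp (β * t)) ∂π) = ⊤) := by
  constructor
  · -- Part (i)
    intro X hX hX0 hInd hmap β hβ hB
    set fX : Ω → ℝ≥0∞ := fun ω => ENNReal.ofReal (Real.exp (β * X ω)) with hfX
    set fD : Ω → ℝ≥0∞ := fun ω => ENNReal.ofReal (Real.exp (β * D ω)) with hfD
    have hmX : Measurable fX := (measE β).comp hX
    have hmD : Measurable fD := (measE β).comp hD
    have hIndF : IndepFun fX fD ℙ := hInd.comp (measE β) (measE β)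
    have hmul : ∫⁻ ω, fX ω * fD ω = (∫⁻ ω, fX ω) * ∫⁻ ω, fD ω :=
      lintegral_mul_eq_lintegral_mul_lintegral_of_indepFun'' hmX.aemeasurable
        hmD.aemeasurable hIndF
    have hle : ∫⁻ ω, fX ω * fD ω ≤ ∫⁻ ω, ENNReal.ofReal (Real.exp (β * max (X ω + D ω) 0)) :=
      lintegral_mono fun ω => mul_le_max β hβ _ _
    have heq : ∫⁻ ω, ENNReal.ofReal (Real.exp (β * max (X ω + D ω) 0)) = ∫⁻ ω, fX ω := by
      have hm1 : Measurable fun ω => max (X ω + D ω) 0 := (hX.add hD).max measurable_const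
      calc ∫⁻ ω, ENNReal.ofReal (Real.exp (β * max (X ω + D ω) 0))
          = ∫⁻ t, ENNReal.ofReal (Real.exp (β * t))
              ∂(Measure.map (fun ω => max (X ω + D ω) 0) ℙ) :=
            (lintegral_map (measE β) hm1).symm
        _ = ∫⁻ t, ENNReal.ofReal (Real.exp (β * t)) ∂(Measure.map X ℙ) := by rw [hmap]
        _ = ∫⁻ ω, fX ω := lintegral_map (measE β) hX
    have hApos : 0 < ∫⁻ ω, fX ω := lint_pos ℙ hmX fun ω => expE_pos β (X ω)
    exact key_top hApos hB (by rw [← hmul]; exact hle.trans heq.le)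
  · -- Part (ii)
    intro hDpos π hπ hinv
    -- find ε > 0 with ℙ {D > ε} > 0
    obtain ⟨n, hn⟩ : ∃ n : ℕ, 0 < ℙ {ω | 1 / (n + 1 : ℝ) < D ω} := by
      by_contra h
      push_neg at h
      simp only [le_zero_iff] at h
      have hsub : {ω | 0 < D ω} ⊆ ⋃ n : ℕ, {ω | 1 / (n + 1 : ℝ) < D ω} := by
        intro ω hω
        have hω' : (0 : ℝ) < D ω := hω
        obtain ⟨n, hn⟩ := exists_nat_one_div_lt hω'
        exact Set.mem_iUnion.2 ⟨n, hn⟩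
      have : ℙ {ω | 0 < D ω} = 0 :=
        le_antisymm ((measure_mono hsub).trans (measure_iUnion_null h).le) zero_le
      exact absurd this hDpos.ne'
    set ε : ℝ := 1 / (n + 1 : ℝ) with hε
    have hεpos : 0 < ε := by positivity
    set p : ℝ≥0∞ := ℙ {ω | ε < D ω} with hp
    have hple : p ≤ 1 := prob_le_one
    have hpne : p ≠ ⊤ := (hple.trans_lt ENNReal.one_lt_top).ne
    set κ : ℝ := p.toReal with hκ
    have hκpos : 0 < κ := ENNReal.toReal_pos hn.ne' hpne
    have hκle : κ ≤ 1 := by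
      rw [hκ, ← ENNReal.toReal_one]
      exact ENNReal.toReal_mono ENNReal.one_ne_top hple
    have hlog : Real.log κ ≤ 0 := Real.log_nonpos hκpos.le hκle
    have hβ₀pos : 0 < (1 - Real.log κ) / ε := div_pos (by linarith) hεpos
    refine ⟨(1 - Real.log κ) / ε, hβ₀pos, ?_⟩
    intro β hβ₀
    have hβ : 0 < β := hβ₀pos.trans_le hβ₀
    set fD : Ω → ℝ≥0∞ := fun ω => ENNReal.ofReal (Real.exp (β * D ω)) with hfD
    have hmD : Measurable fD := (measE β).comp hD
    -- lower bound on E[e^{βD}]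
    have hBlow : ENNReal.ofReal (Real.exp (β * ε)) * p ≤ ∫⁻ ω, fD ω := by
      calc ENNReal.ofReal (Real.exp (β * ε)) * p
          = ∫⁻ _ in {ω | ε < D ω}, ENNReal.ofReal (Real.exp (β * ε)) :=
            (setLIntegral_const _ _).symm
        _ ≤ ∫⁻ ω in {ω | ε < D ω}, fD ω :=
            setLIntegral_mono hmD fun ω hω => ENNReal.ofReal_le_ofReal
              (Real.exp_le_exp.2 (mul_le_mul_of_nonneg_left hω.le hβ.le))
        _ ≤ ∫⁻ ω, fD ω := setLIntegral_le_lintegral _ _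
    have hexpβε : Real.exp 1 / κ ≤ Real.exp (β * ε) := by
      have h1 : Real.exp (1 - Real.log κ) = Real.exp 1 / κ := by
        rw [Real.exp_sub, Real.exp_log hκpos]
      rw [← h1]
      exact Real.exp_le_exp.2 ((div_le_iff₀ hεpos).1 hβ₀)
    have hone : (1 : ℝ) < Real.exp (β * ε) * κ := by
      have hcancel : Real.exp 1 / κ * κ = Real.exp 1 := div_mul_cancel₀ _ hκpos.ne'
      nlinarith [Real.add_one_le_exp (1 : ℝ)]
    have hB : 1 < ∫⁻ ω, fD ω := by
      refine lt_of_lt_of_le ?_ hBlow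
      have hpeq : p = ENNReal.ofReal κ := (ENNReal.ofReal_toReal hpne).symm
      rw [hpeq, ← ENNReal.ofReal_mul (Real.exp_pos _).le]
      exact ENNReal.one_lt_ofReal.2 hone
    -- the main argument on the product space
    set μD : Measure ℝ := Measure.map D ℙ with hμD
    haveI : IsProbabilityMeasure μD := Measure.isProbabilityMeasure_map hD.aemeasurable
    set g : ℝ → ℝ≥0∞ := fun t => ENNReal.ofReal (Real.exp (β * t)) with hg
    have hBeq : ∫⁻ s, g s ∂μD = ∫⁻ ω, fD ω := lintegral_map (measE β) hD
    have hprod : ∫⁻ z : ℝ × ℝ, g z.1 * g z.2 ∂(π.prod μD)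
        = (∫⁻ t, g t ∂π) * ∫⁻ s, g s ∂μD :=
      lintegral_prod_mul (measE β).aemeasurable (measE β).aemeasurable
    have hle : ∫⁻ z : ℝ × ℝ, g z.1 * g z.2 ∂(π.prod μD)
        ≤ ∫⁻ z : ℝ × ℝ, ENNReal.ofReal (Real.exp (β * max (z.1 + z.2) 0)) ∂(π.prod μD) :=
      lintegral_mono fun z => mul_le_max β hβ _ _
    have heq : ∫⁻ z : ℝ × ℝ, ENNReal.ofReal (Real.exp (β * max (z.1 + z.2) 0)) ∂(π.prod μD)
        = ∫⁻ t, g t ∂π := by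
      have hm : Measurable fun z : ℝ × ℝ => max (z.1 + z.2) 0 :=
        (measurable_fst.add measurable_snd).max measurable_const
      rw [← lintegral_map (measE β) hm, hinv]
    have hApos : 0 < ∫⁻ t, g t ∂π := lint_pos π (measE β) fun t => expE_pos β t
    refine key_top hApos (hBeq ▸ hB) ?_
    rw [← hprod]
    exact hle.trans heq.le
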